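/- For the configuration of Example with color classes Δ_i = {a^i, b^i_1, ..., b^i_{n_i-1}}, the avoiding complex Av collapses through a sequence of elementary collapses onto the boundary complex of the simplex {a^0, ..., a^d}; in particular Av is homotopy equivalent to S^{d-1}. -/

import Mathlib

open Finset

/-- Faces of the colorful complex `Rain(n)`: at most one vertex of each color. -/
def IsColorful {d : ℕ} {n : Fin (d + 1) → ℕ}
    (σ : Finset ((i : Fin (d + 1)) × Fin (n i))) : Prop :=
  ∀ v ∈ σ, ∀ w ∈ σ, v.1 = w.1 → v = w

/-- The geometric realization of a simplicial complex `K` on the finite vertex set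
`V`: convex combinations of vertices whose support is a face of `K`. -/
def realization {V : Type*} [Fintype V] (K : Finset V → Prop) : Set (V → ℝ) :=
  {f | (∀ v, 0 ≤ f v) ∧ ∑ v, f v = 1 ∧ ∃ σ : Finset V, K σ ∧ Function.support f = ↑σ}

/-- An elementary (generalized) collapse: remove all faces between a free face `τ`
and the unique maximal face `σ` containing it. -/
def CollapseStep {V : Type*} [DecidableEq V] (K K' : Finset (Finset V)) : Prop :=
  ∃ τ σ : Finset V, τ ∈ K ∧ σ ∈ K ∧ τ ⊂ σ ∧
    (∀ γ ∈ K, τ ⊆ γ → γ ⊆ σ) ∧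
    K' = K.filter (fun γ => ¬ τ ⊆ γ)

/-- The avoiding complex of the extremal example with color classes
`Δ i = {a^i, b^i_1, …, b^i_{n i - 1}}` (here `a^i = ⟨i, 0⟩`): all colorful faces
except the two kinds of hitting `d`-simplices, namely the all-special transversal
and the all-nonspecial transversals. -/
noncomputable def exampleAvoiding (d : ℕ) (n : Fin (d + 1) → ℕ) [∀ i, NeZero (n i)] :
    Finset (Finset ((i : Fin (d + 1)) × Fin (n i))) := by
  classical
  exact Finset.univ.filter (fun σ => IsColorful σ ∧
    ¬ (σ.card = d + 1 ∧ ((∀ v ∈ σ, (v.2 : ℕ) = 0) ∨ (∀ v ∈ σ, (v.2 : ℕ) ≠ 0))))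

/-- The boundary complex of the special simplex `{a^0, …, a^d}`: proper subsets of
the set of special vertices. -/
noncomputable def specialBoundary (d : ℕ) (n : Fin (d + 1) → ℕ) [∀ i, NeZero (n i)] :
    Finset (Finset ((i : Fin (d + 1)) × Fin (n i))) := by
  classical
  exact Finset.univ.filter (fun σ => IsColorful σ ∧ σ.card ≤ d ∧ ∀ v ∈ σ, (v.2 : ℕ) = 0)
-- Part 1: topological collapse lemma
section Collapse

variable {V : Type*} [Fintype V] [DecidableEq V]

/-- Down-closed family of finsets. -/
def DownClosed (K : Finset (Finset V)) : Prop :=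
  ∀ ⦃σ⦄, σ ∈ K → ∀ ⦃ρ : Finset V⦄, ρ ⊆ σ → ρ ∈ K

lemma continuous_finset_inf' {X ι : Type*} [TopologicalSpace X] {s : Finset ι}
    (hs : s.Nonempty) (g : ι → X → ℝ) (hg : ∀ i, Continuous (g i)) :
    Continuous fun x => s.inf' hs fun i => g i x := by
  induction hs using Finset.Nonempty.cons_induction with
  | singleton a => simpa using hg a
  | cons a s ha hs ih =>
      have : (fun x => (Finset.cons a s ha).inf' (Finset.cons_nonempty ha) fun i => g i x)
          = fun x => min (g a x) (s.inf' hs fun i => g i x) := by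
        funext x; rw [Finset.inf'_cons]
      rw [this]
      exact (hg a).min ih

theorem collapse_he (K : Finset (Finset V)) (hD : DownClosed K) (τ : Finset V) (v : V)
    (hv : v ∉ τ) (hne : τ.Nonempty) (hσK : insert v τ ∈ K)
    (hfree : ∀ γ ∈ K, τ ⊆ γ → γ ⊆ insert v τ) :
    Nonempty (ContinuousMap.HomotopyEquiv
      (realization (fun σ => σ ∈ K))
      (realization (fun σ => σ ∈ K.filter (fun γ => ¬ τ ⊆ γ)))) := by
  classical
  set A : Set (V → ℝ) := realization (fun σ => σ ∈ K) with hA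
  set B : Set (V → ℝ) := realization (fun σ => σ ∈ K.filter (fun γ => ¬ τ ⊆ γ)) with hB
  set k : ℝ := (τ.card : ℝ) with hk
  have hk0 : 0 < k := by
    simp only [hk, Nat.cast_pos, Finset.card_pos]; exact hne
  set c : ℝ := 2 / k with hc
  have hc0 : 0 < c := by positivity
  set M : (V → ℝ) → ℝ := fun f => τ.inf' hne f with hM
  set S : (V → ℝ) → ℝ := fun f => c / (c - M f) with hS
  set r : (V → ℝ) → V → ℝ := fun f w =>
    if w = v then S f * f v + (S f - 1) else if w ∈ τ then S f * (f w - M f) else f w with hr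
  -- basic estimates for f ∈ A
  have hM0 : ∀ f : V → ℝ, (∀ w, 0 ≤ f w) → 0 ≤ M f := fun f hf =>
    Finset.le_inf' hne f (fun b _ => hf b)
  have hMf : ∀ f : V → ℝ, ∀ w ∈ τ, M f ≤ f w := fun f w hw => Finset.inf'_le f hw
  have hMlt : ∀ f : V → ℝ, f ∈ A → M f < c := by
    rintro f ⟨hf0, hf1, -⟩
    have h1 : τ.card • M f ≤ ∑ w ∈ τ, f w :=
      Finset.card_nsmul_le_sum τ f (M f) (fun b hb => hMf f b hb)
    have h2 : ∑ w ∈ τ, f w ≤ ∑ w, f w :=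
      Finset.sum_le_sum_of_subset_of_nonneg (Finset.subset_univ τ) (fun w _ _ => hf0 w)
    rw [nsmul_eq_mul] at h1
    have h3 : k * M f ≤ 1 := by rw [hk]; linarith [hf1 ▸ le_trans h1 h2]
    rw [hc, lt_div_iff₀ hk0]; nlinarith
  have hcM : ∀ f : V → ℝ, f ∈ A → 0 < c - M f := fun f hf => by linarith [hMlt f hf]
  have hS1 : ∀ f : V → ℝ, f ∈ A → 1 ≤ S f := by
    intro f hf
    have h := hcM f hf
    have h0 := hM0 f hf.1
    show 1 ≤ c / (c - M f)
    rw [le_div_iff₀ h]; linarith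
  have hSid : ∀ f : V → ℝ, f ∈ A → S f * (c - M f) = c := fun f hf =>
    div_mul_cancel₀ _ (ne_of_gt (hcM f hf))
  -- r is nonnegative
  have hrpos : ∀ f : V → ℝ, f ∈ A → ∀ w, 0 ≤ r f w := by
    intro f hf w
    have hf0 := hf.1
    have h1 := hS1 f hf
    simp only [hr]
    split_ifs with h2 h3
    · nlinarith [hf0 v]
    · nlinarith [hMf f w h3]
    · exact hf0 w
  have hreq : ∀ f : V → ℝ, (∀ w, 0 ≤ f w) → M f = 0 → r f = f := by
    intro f hf0 hMz
    have : S f = 1 := by show c / (c - M f) = 1; rw [hMz, sub_zero]; exact div_self (ne_of_gt hc0)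
    funext w
    simp only [hr, this, hMz]
    split_ifs with h1 h2
    · subst h1; ring
    · ring
    · rfl
  -- when M f > 0, f is supported inside insert v τ
  have hsupp : ∀ f : V → ℝ, f ∈ A → 0 < M f → ∀ w, w ∉ insert v τ → f w = 0 := by
    rintro f ⟨hf0, hf1, σf, hσfK, hσf⟩ hMpos w hw
    have hτσ : τ ⊆ σf := by
      intro u hu
      have : f u ≠ 0 := ne_of_gt (lt_of_lt_of_le hMpos (hMf f u hu))
      have : u ∈ Function.support f := this
      rwa [hσf, Finset.mem_coe] at this
    have hfin : σf ⊆ insert v τ := hfree σf hσfK hτσ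
    by_contra hfw
    have : w ∈ Function.support f := hfw
    rw [hσf, Finset.mem_coe] at this
    exact hw (hfin this)
  -- the sum of r f is 1
  have hrsum : ∀ f : V → ℝ, f ∈ A → ∑ w, r f w = 1 := by
    intro f hf
    rcases eq_or_lt_of_le (hM0 f hf.1) with hMz | hMpos
    · rw [hreq f hf.1 hMz.symm]; exact hf.2.1
    have hout := hsupp f hf hMpos
    have hcompl0 : ∀ g : V → ℝ, (∀ w, w ∉ insert v τ → g w = 0) →
        ∑ w ∈ (insert v τ)ᶜ, g w = 0 :=
      fun g hg => Finset.sum_eq_zero (fun w hw => hg w (Finset.mem_compl.mp hw))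
    have hsum1 : ∑ w ∈ insert v τ, f w = 1 := by
      have := Finset.sum_add_sum_compl (insert v τ) f
      rw [hf.2.1] at this
      rw [← this, hcompl0 f hout, add_zero]
    have hrout : ∀ w, w ∉ insert v τ → r f w = 0 := by
      intro w hw
      have h1 : w ≠ v := fun h => hw (h ▸ Finset.mem_insert_self v τ)
      have h2 : w ∉ τ := fun h => hw (Finset.mem_insert_of_mem h)
      simp only [hr, if_neg h1, if_neg h2]
      exact hout w hw
    have key : ∑ w ∈ insert v τ, r f w = 1 := by
      rw [Finset.sum_insert hv]
      have hrv : r f v = S f * f v + (S f - 1) := by simp only [hr, if_pos rfl]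
      rw [hrv]
      have h1 : ∀ w ∈ τ, r f w = S f * (f w - M f) := by
        intro w hw
        have : w ≠ v := fun h => hv (h ▸ hw)
        simp only [hr, if_neg this, if_pos hw]
      rw [Finset.sum_congr rfl h1]
      have h2 : ∑ w ∈ τ, S f * (f w - M f) = S f * (∑ w ∈ τ, f w) - k * (S f * M f) := by
        rw [Finset.sum_congr rfl (fun w _ => mul_sub (S f) (f w) (M f)), Finset.sum_sub_distrib,
          Finset.sum_const, ← Finset.mul_sum, nsmul_eq_mul, hk]
      rw [h2]
      have hT : ∑ w ∈ τ, f w = 1 - f v := by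
        rw [Finset.sum_insert hv] at hsum1; linarith
      have h5 := hSid f hf
      rw [hc] at h5
      have hkne : k ≠ 0 := ne_of_gt hk0
      have h4 : S f * (2 - k * M f) = 2 := by
        field_simp at h5
        nlinarith [h5]
      rw [hT]
      linear_combination h4
    have := Finset.sum_add_sum_compl (insert v τ) (r f)
    rw [key, hcompl0 (r f) hrout, add_zero] at this
    exact this.symm
  -- support description helper
  have hsupp_filter : ∀ g : V → ℝ, (∀ w, w ∉ insert v τ → g w = 0) →
      Function.support g = ↑((insert v τ).filter (fun w => g w ≠ 0)) := by
    intro g hg; ext w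
    simp only [Function.mem_support, Finset.coe_filter, Set.mem_setOf_eq]
    exact ⟨fun hw => ⟨by by_contra hmem; exact hw (hg w hmem), hw⟩, fun h => h.2⟩
  have hrout' : ∀ f : V → ℝ, f ∈ A → 0 < M f → ∀ w, w ∉ insert v τ → r f w = 0 := by
    intro f hf hMpos w hw
    have h1 : w ≠ v := fun h => hw (h ▸ Finset.mem_insert_self v τ)
    have h2 : w ∉ τ := fun h => hw (Finset.mem_insert_of_mem h)
    simp only [hr, if_neg h1, if_neg h2]
    exact hsupp f hf hMpos w hw
  -- support of r f is a face of K avoiding τ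
  have hrsupp : ∀ f : V → ℝ, f ∈ A →
      ∃ ρ : Finset V, (ρ ∈ K ∧ ¬ τ ⊆ ρ) ∧ Function.support (r f) = ↑ρ := by
    intro f hf
    obtain ⟨u0, hu0τ, hu0⟩ := Finset.exists_mem_eq_inf' hne f
    rcases eq_or_lt_of_le (hM0 f hf.1) with hMz | hMpos
    · obtain ⟨σf, hσfK, hσf⟩ := hf.2.2
      refine ⟨σf, ⟨hσfK, ?_⟩, by rw [hreq f hf.1 hMz.symm]; exact hσf⟩
      intro hτσ
      have h0 : f u0 = 0 := by rw [← hu0]; exact hMz.symm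
      have h1 : u0 ∉ Function.support f := by simp [Function.mem_support, h0]
      rw [hσf] at h1
      exact h1 (hτσ hu0τ)
    · refine ⟨(insert v τ).filter (fun w => r f w ≠ 0),
        ⟨hD hσK (Finset.filter_subset _ _), ?_⟩, hsupp_filter (r f) (hrout' f hf hMpos)⟩
      intro hτρ
      have hu0' : r f u0 = 0 := by
        have hne' : u0 ≠ v := fun h => hv (h ▸ hu0τ)
        simp only [hr, if_neg hne', if_pos hu0τ, ← hu0]
        ring
      have := hτρ hu0τ
      rw [Finset.mem_filter] at this
      exact this.2 hu0'
  have hrB : ∀ f : V → ℝ, f ∈ A → r f ∈ B := by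
    intro f hf
    obtain ⟨ρ, ⟨hρK, hρτ⟩, hsup⟩ := hrsupp f hf
    exact ⟨hrpos f hf, hrsum f hf, ρ, Finset.mem_filter.mpr ⟨hρK, hρτ⟩, hsup⟩
  have hBA : B ⊆ A := by
    rintro f ⟨h1, h2, σf, hσfK, hσf⟩
    exact ⟨h1, h2, σf, (Finset.mem_filter.mp hσfK).1, hσf⟩
  have hfix : ∀ f : V → ℝ, f ∈ B → r f = f := by
    rintro f ⟨h1, h2, σf, hσfK, hσf⟩
    rw [Finset.mem_filter] at hσfK
    apply hreq f h1
    obtain ⟨u, huτ, huσ⟩ := Finset.not_subset.mp hσfK.2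
    have hfu : f u = 0 := by
      by_contra h
      exact huσ (by rw [← Finset.mem_coe, ← hσf]; exact h)
    exact le_antisymm (hfu ▸ hMf f u huτ) (hM0 f h1)
  -- homotopy stays in A
  have hHmem : ∀ (t : ℝ), 0 ≤ t → t ≤ 1 → ∀ f : V → ℝ, f ∈ A →
      (fun w => (1 - t) * r f w + t * f w) ∈ A := by
    intro t ht0 ht1 f hf
    refine ⟨fun w => by dsimp only; nlinarith [hrpos f hf w, hf.1 w], ?_, ?_⟩
    · rw [Finset.sum_add_distrib, ← Finset.mul_sum, ← Finset.mul_sum, hrsum f hf, hf.2.1]; ring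
    · rcases eq_or_lt_of_le (hM0 f hf.1) with hMz | hMpos
      · obtain ⟨σf, h3, h4⟩ := hf.2.2
        refine ⟨σf, h3, ?_⟩
        rw [hreq f hf.1 hMz.symm]
        have he : (fun w => (1 - t) * f w + t * f w) = f := by funext w; ring
        rw [he]
        exact h4
      · refine ⟨(insert v τ).filter (fun w => ((1 - t) * r f w + t * f w) ≠ 0),
          hD hσK (Finset.filter_subset _ _), hsupp_filter _ ?_⟩
        intro w hw
        rw [hrout' f hf hMpos w hw, hsupp f hf hMpos w hw]
        ring
  -- continuity
  have cval : Continuous fun f : A => (f : V → ℝ) := continuous_subtype_val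
  have cM : Continuous fun f : A => M (f : V → ℝ) :=
    continuous_finset_inf' hne (fun u => fun f : A => (f : V → ℝ) u)
      (fun u => (continuous_apply u).comp cval)
  have cS : Continuous fun f : A => S (f : V → ℝ) :=
    continuous_const.div (continuous_const.sub cM) (fun f => ne_of_gt (hcM _ f.2))
  have cr : Continuous fun f : A => r (f : V → ℝ) := by
    apply continuous_pi
    intro w
    simp only [hr]
    by_cases h1 : w = v
    · simp only [if_pos h1]
      exact (cS.mul ((continuous_apply v).comp cval)).add (cS.sub continuous_const)
    · simp only [if_neg h1]
      by_cases h2 : w ∈ τ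
      · simp only [if_pos h2]
        exact cS.mul (((continuous_apply w).comp cval).sub cM)
      · simp only [if_neg h2]
        exact (continuous_apply w).comp cval
  let rmap : C(A, B) := ⟨fun f => ⟨r f.1, hrB f.1 f.2⟩, cr.subtype_mk _⟩
  let imap : C(B, A) := ⟨fun g => ⟨g.1, hBA g.2⟩, continuous_subtype_val.subtype_mk _⟩
  have hcomp2 : rmap.comp imap = ContinuousMap.id B := by
    apply ContinuousMap.ext
    intro g
    apply Subtype.ext
    exact hfix g.1 g.2
  have hHcont : Continuous fun p : (unitInterval × A) =>
      (fun w => (1 - (p.1 : ℝ)) * r (p.2 : V → ℝ) w + (p.1 : ℝ) * (p.2 : V → ℝ) w) := by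
    apply continuous_pi
    intro w
    have ct : Continuous fun p : (unitInterval × A) => (p.1 : ℝ) :=
      continuous_subtype_val.comp continuous_fst
    have crw : Continuous fun p : (unitInterval × A) => r (p.2 : V → ℝ) w :=
      (continuous_apply w).comp (cr.comp continuous_snd)
    have cfw : Continuous fun p : (unitInterval × A) => (p.2 : V → ℝ) w :=
      (continuous_apply w).comp (cval.comp continuous_snd)
    exact ((continuous_const.sub ct).mul crw).add (ct.mul cfw)
  let H : ContinuousMap.Homotopy (imap.comp rmap) (ContinuousMap.id A) :=
    { toFun := fun p => ⟨fun w =>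
        (1 - (p.1 : ℝ)) * r (p.2 : V → ℝ) w + (p.1 : ℝ) * (p.2 : V → ℝ) w,
        hHmem _ p.1.2.1 p.1.2.2 _ p.2.2⟩
      continuous_toFun := hHcont.subtype_mk _
      map_zero_left := fun f => by
        apply Subtype.ext; funext w
        show (1 - ((0 : unitInterval) : ℝ)) * r (f : V → ℝ) w
            + ((0 : unitInterval) : ℝ) * (f : V → ℝ) w = _
        simp [imap, rmap]
      map_one_left := fun f => by
        apply Subtype.ext; funext w
        show (1 - ((1 : unitInterval) : ℝ)) * r (f : V → ℝ) w
            + ((1 : unitInterval) : ℝ) * (f : V → ℝ) w = _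
        simp }
  refine ⟨⟨rmap, imap, ⟨H⟩, ?_⟩⟩
  rw [hcomp2]


end Collapse
section Combinatorics
set_option linter.unusedSectionVars false

variable {d : ℕ} {n : Fin (d + 1) → ℕ} [∀ i, NeZero (n i)]

/-- The special vertex of color `i`. -/
def aa (n : Fin (d + 1) → ℕ) [∀ i, NeZero (n i)] (i : Fin (d + 1)) :
    (i : Fin (d + 1)) × Fin (n i) := ⟨i, 0⟩

lemma aa_special (i : Fin (d + 1)) : (((aa n i).2 : ℕ)) = 0 := by
  simp [aa]

lemma special_eq {v : (i : Fin (d + 1)) × Fin (n i)} (h : (v.2 : ℕ) = 0) : v = aa n v.1 := by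
  obtain ⟨i, j⟩ := v
  have : j = 0 := Fin.ext (by simpa using h)
  rw [aa, this]

lemma aa_inj {i j : Fin (d + 1)} (h : aa n i = aa n j) : i = j := congrArg Sigma.fst h

lemma mem_Av {σ : Finset ((i : Fin (d + 1)) × Fin (n i))} :
    σ ∈ exampleAvoiding d n ↔ IsColorful σ ∧
      ¬(σ.card = d + 1 ∧ ((∀ v ∈ σ, (v.2 : ℕ) = 0) ∨ (∀ v ∈ σ, (v.2 : ℕ) ≠ 0))) := by
  simp [exampleAvoiding]

lemma mem_SB {σ : Finset ((i : Fin (d + 1)) × Fin (n i))} :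
    σ ∈ specialBoundary d n ↔ IsColorful σ ∧ σ.card ≤ d ∧ ∀ v ∈ σ, (v.2 : ℕ) = 0 := by
  simp [specialBoundary]

lemma colorful_card_le {σ : Finset ((i : Fin (d + 1)) × Fin (n i))} (h : IsColorful σ) :
    σ.card ≤ d + 1 := by
  have := Finset.card_le_card_of_injOn (fun v => v.1) (fun v _ => Finset.mem_univ v.1)
    (fun v hv w hw hvw => h v hv w hw hvw)
  simpa using this

/-- The set of colors having no nonspecial vertex in `σ`. -/
def Sset (σ : Finset ((i : Fin (d + 1)) × Fin (n i))) : Finset (Fin (d + 1)) :=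
  Finset.univ.filter (fun i => ∀ v ∈ σ, v.1 = i → (v.2 : ℕ) = 0)

lemma mem_Sset {σ : Finset ((i : Fin (d + 1)) × Fin (n i))} {i} :
    i ∈ Sset σ ↔ ∀ v ∈ σ, v.1 = i → (v.2 : ℕ) = 0 := by
  simp [Sset]

/-- The matching color of a face: least color with no nonspecial vertex. -/
def mcol (σ : Finset ((i : Fin (d + 1)) × Fin (n i))) : Fin (d + 1) :=
  if h : (Sset σ).Nonempty then (Sset σ).min' h else ⟨0, Nat.succ_pos d⟩

/-- Number of nonspecial vertices. -/
def nscard (σ : Finset ((i : Fin (d + 1)) × Fin (n i))) : ℕ :=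
  (σ.filter (fun v => (v.2 : ℕ) ≠ 0)).card

/-- Priority key of the pair of a face. -/
def pk (σ : Finset ((i : Fin (d + 1)) × Fin (n i))) : ℕ :=
  (d + 2) * (insert (aa n (mcol σ)) σ).card + nscard σ

/-- The bottoms of the matched pairs. -/
noncomputable def Bottoms (d : ℕ) (n : Fin (d + 1) → ℕ) [∀ i, NeZero (n i)] :
    Finset (Finset ((i : Fin (d + 1)) × Fin (n i))) :=
  (exampleAvoiding d n).filter
    (fun τ => (∃ v ∈ τ, (v.2 : ℕ) ≠ 0) ∧ aa n (mcol τ) ∉ τ)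

/-- Intermediate complexes along the collapse. -/
noncomputable def KP (P : Finset (Finset ((i : Fin (d + 1)) × Fin (n i)))) :
    Finset (Finset ((i : Fin (d + 1)) × Fin (n i))) :=
  specialBoundary d n ∪ P.biUnion (fun τ => {τ, insert (aa n (mcol τ)) τ})

lemma Sset_nonempty {σ : Finset ((i : Fin (d + 1)) × Fin (n i))}
    (hσ : σ ∈ exampleAvoiding d n) : (Sset σ).Nonempty := by
  rw [mem_Av] at hσ
  obtain ⟨hcol, hforb⟩ := hσ
  by_contra hS
  rw [Finset.not_nonempty_iff_eq_empty, Finset.eq_empty_iff_forall_notMem] at hS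
  have h1 : ∀ i, ∃ v, v ∈ σ ∧ v.1 = i ∧ (v.2 : ℕ) ≠ 0 := by
    intro i
    have := hS i
    simp only [mem_Sset] at this
    push_neg at this
    obtain ⟨v, hv1, hv2, hv3⟩ := this
    exact ⟨v, hv1, hv2, hv3⟩
  choose g hg1 hg2 hg3 using h1
  have hginj : Function.Injective g := fun i j hij => by rw [← hg2 i, ← hg2 j, hij]
  have himg : Finset.univ.image g ⊆ σ := by
    intro w hw
    obtain ⟨i, _, rfl⟩ := Finset.mem_image.mp hw
    exact hg1 i
  have hcard1 : d + 1 ≤ σ.card := by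
    have h2 : (Finset.univ.image g).card = d + 1 := by
      rw [Finset.card_image_of_injective _ hginj, Finset.card_univ, Fintype.card_fin]
    calc d + 1 = (Finset.univ.image g).card := h2.symm
      _ ≤ σ.card := Finset.card_le_card himg
  have hcard : σ.card = d + 1 := le_antisymm (colorful_card_le hcol) hcard1
  have heq : Finset.univ.image g = σ := by
    apply Finset.eq_of_subset_of_card_le himg
    rw [hcard, Finset.card_image_of_injective _ hginj, Finset.card_univ, Fintype.card_fin]
  apply hforb
  refine ⟨hcard, Or.inr ?_⟩
  intro v hv
  rw [← heq] at hv
  obtain ⟨i, _, rfl⟩ := Finset.mem_image.mp hv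
  exact hg3 i

lemma mcol_mem {σ : Finset ((i : Fin (d + 1)) × Fin (n i))} (h : (Sset σ).Nonempty) :
    mcol σ ∈ Sset σ := by
  rw [mcol, dif_pos h]; exact Finset.min'_mem _ h

lemma mcol_congr {σ ρ : Finset ((i : Fin (d + 1)) × Fin (n i))} (h : Sset σ = Sset ρ) :
    mcol σ = mcol ρ := by
  simp only [mcol, h]

lemma Sset_insert_special (σ : Finset ((i : Fin (d + 1)) × Fin (n i)))
    {w : (i : Fin (d + 1)) × Fin (n i)} (hw : (w.2 : ℕ) = 0) :
    Sset (insert w σ) = Sset σ := by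
  ext i
  simp [mem_Sset, Finset.forall_mem_insert, hw, Fin.val_eq_zero_iff.mp hw]

lemma Sset_erase_special (σ : Finset ((i : Fin (d + 1)) × Fin (n i)))
    {w : (i : Fin (d + 1)) × Fin (n i)} (hw : (w.2 : ℕ) = 0) :
    Sset (σ.erase w) = Sset σ := by
  ext i
  simp only [mem_Sset]
  constructor
  · intro h v hv hvi
    rcases eq_or_ne v w with rfl | hne
    · exact hw
    · exact h v (Finset.mem_erase.mpr ⟨hne, hv⟩) hvi
  · intro h v hv hvi
    exact h v (Finset.mem_erase.mp hv).2 hvi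

lemma nscard_insert_special (σ : Finset ((i : Fin (d + 1)) × Fin (n i)))
    {w : (i : Fin (d + 1)) × Fin (n i)} (hw : (w.2 : ℕ) = 0) :
    nscard (insert w σ) = nscard σ := by
  unfold nscard
  rw [Finset.filter_insert, if_neg (by simp [hw])]

lemma mem_Bottoms {τ : Finset ((i : Fin (d + 1)) × Fin (n i))} :
    τ ∈ Bottoms d n ↔ τ ∈ exampleAvoiding d n ∧
      (∃ v ∈ τ, (v.2 : ℕ) ≠ 0) ∧ aa n (mcol τ) ∉ τ := by
  simp only [Bottoms, Finset.mem_filter]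

lemma no_color_mcol {σ : Finset ((i : Fin (d + 1)) × Fin (n i))}
    (hσ : σ ∈ exampleAvoiding d n) (hbot : aa n (mcol σ) ∉ σ) :
    ∀ v ∈ σ, v.1 ≠ mcol σ := by
  intro v hv h
  have hsp := mem_Sset.mp (mcol_mem (Sset_nonempty hσ)) v hv h
  have : v = aa n (mcol σ) := by rw [special_eq hsp, h]
  exact hbot (this ▸ hv)

lemma top_mem_Av {τ : Finset ((i : Fin (d + 1)) × Fin (n i))} (hτ : τ ∈ Bottoms d n) :
    insert (aa n (mcol τ)) τ ∈ exampleAvoiding d n := by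
  obtain ⟨hAv, ⟨w, hwτ, hwns⟩, hbot⟩ := mem_Bottoms.mp hτ
  have hcol := (mem_Av.mp hAv).1
  rw [mem_Av]
  constructor
  · intro x hx y hy hxy
    rcases Finset.mem_insert.mp hx with rfl | hxτ <;>
      rcases Finset.mem_insert.mp hy with rfl | hyτ
    · rfl
    · exact absurd hxy.symm (no_color_mcol hAv hbot y hyτ)
    · exact absurd hxy (no_color_mcol hAv hbot x hxτ)
    · exact hcol x hxτ y hyτ hxy
  · rintro ⟨-, hor | hor⟩
    · exact hwns (hor w (Finset.mem_insert_of_mem hwτ))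
    · exact hor (aa n (mcol τ)) (Finset.mem_insert_self _ _) (aa_special _)

lemma mcol_top {τ : Finset ((i : Fin (d + 1)) × Fin (n i))} :
    mcol (insert (aa n (mcol τ)) τ) = mcol τ :=
  mcol_congr (Sset_insert_special τ (aa_special _))

lemma pk_top {τ : Finset ((i : Fin (d + 1)) × Fin (n i))} :
    pk (insert (aa n (mcol τ)) τ) = pk τ := by
  unfold pk
  rw [mcol_top, Finset.insert_idem, nscard_insert_special τ (aa_special _)]

lemma erase_top {τ : Finset ((i : Fin (d + 1)) × Fin (n i))} (hτ : τ ∈ Bottoms d n) :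
    (insert (aa n (mcol τ)) τ).erase (aa n (mcol τ)) = τ :=
  Finset.erase_insert (mem_Bottoms.mp hτ).2.2

lemma avBot_ne_top {τ τ' : Finset ((i : Fin (d + 1)) × Fin (n i))}
    (hτ : τ ∈ Bottoms d n) : τ ≠ insert (aa n (mcol τ')) τ' := by
  intro h
  have h1 : mcol τ = mcol τ' := by rw [h, mcol_top]
  have := (mem_Bottoms.mp hτ).2.2
  rw [h1, h] at this
  exact this (Finset.mem_insert_self _ _)

lemma top_inj {τ τ' : Finset ((i : Fin (d + 1)) × Fin (n i))}
    (hτ : τ ∈ Bottoms d n) (hτ' : τ' ∈ Bottoms d n)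
    (h : insert (aa n (mcol τ)) τ = insert (aa n (mcol τ')) τ') : τ = τ' := by
  have h1 : mcol τ = mcol τ' := by rw [← mcol_top (τ := τ), ← mcol_top (τ := τ'), h]
  calc τ = (insert (aa n (mcol τ)) τ).erase (aa n (mcol τ)) := (erase_top hτ).symm
    _ = (insert (aa n (mcol τ')) τ').erase (aa n (mcol τ')) := by rw [h, h1]
    _ = τ' := erase_top hτ'

lemma Av_down : DownClosed (exampleAvoiding d n) := by
  intro σ hσ ρ hρ
  rw [mem_Av] at hσ ⊢
  obtain ⟨hcol, hforb⟩ := hσ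
  refine ⟨fun x hx y hy hxy => hcol x (hρ hx) y (hρ hy) hxy, ?_⟩
  rintro ⟨hcard, hor⟩
  have : ρ = σ := by
    apply Finset.eq_of_subset_of_card_le hρ
    rw [hcard]
    exact colorful_card_le hcol
  exact hforb ⟨by rw [← this]; exact hcard, by rw [← this]; exact hor⟩

lemma SB_subset_Av : specialBoundary d n ⊆ exampleAvoiding d n := by
  intro σ hσ
  rw [mem_SB] at hσ
  rw [mem_Av]
  refine ⟨hσ.1, ?_⟩
  rintro ⟨hcard, -⟩
  have := hσ.2.1
  omega

end Combinatorics
section Combinatorics2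
set_option linter.unusedSectionVars false

variable {d : ℕ} {n : Fin (d + 1) → ℕ} [∀ i, NeZero (n i)]

lemma mem_KP {P : Finset (Finset ((i : Fin (d + 1)) × Fin (n i)))}
    {γ : Finset ((i : Fin (d + 1)) × Fin (n i))} :
    γ ∈ KP P ↔ γ ∈ specialBoundary d n ∨
      ∃ τ ∈ P, γ = τ ∨ γ = insert (aa n (mcol τ)) τ := by
  simp [KP, Finset.mem_union, Finset.mem_biUnion, Finset.mem_insert, Finset.mem_singleton]

lemma KP_empty : KP (∅ : Finset (Finset ((i : Fin (d + 1)) × Fin (n i)))) =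
    specialBoundary d n := by
  simp [KP]

lemma nscard_le_card {σ : Finset ((i : Fin (d + 1)) × Fin (n i))} : nscard σ ≤ σ.card :=
  Finset.card_filter_le _ _

lemma bottoms_nonempty_face {τ : Finset ((i : Fin (d + 1)) × Fin (n i))}
    (hτ : τ ∈ Bottoms d n) : τ.Nonempty := by
  obtain ⟨-, ⟨v, hv, -⟩, -⟩ := mem_Bottoms.mp hτ
  exact ⟨v, hv⟩

lemma KP_Bottoms : KP (Bottoms d n) = exampleAvoiding d n := by
  ext γ
  rw [mem_KP]
  constructor
  · rintro (h | ⟨τ, hτ, rfl | rfl⟩)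
    · exact SB_subset_Av h
    · exact (mem_Bottoms.mp hτ).1
    · exact top_mem_Av hτ
  · intro hγ
    by_cases hns : ∃ v ∈ γ, (v.2 : ℕ) ≠ 0
    · right
      by_cases hbot : aa n (mcol γ) ∉ γ
      · exact ⟨γ, mem_Bottoms.mpr ⟨hγ, hns, hbot⟩, Or.inl rfl⟩
      · push_neg at hbot
        set τ := γ.erase (aa n (mcol γ)) with hτdef
        have hSeq : Sset τ = Sset γ := Sset_erase_special γ (aa_special _)
        have hmc : mcol τ = mcol γ := mcol_congr hSeq
        have hτAv : τ ∈ exampleAvoiding d n := Av_down hγ (Finset.erase_subset _ _)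
        have hτB : τ ∈ Bottoms d n := by
          rw [mem_Bottoms]
          refine ⟨hτAv, ?_, ?_⟩
          · obtain ⟨v, hv, hvns⟩ := hns
            refine ⟨v, Finset.mem_erase.mpr ⟨?_, hv⟩, hvns⟩
            intro h
            exact hvns (h ▸ aa_special _)
          · rw [hmc]
            exact Finset.notMem_erase _ _
        refine ⟨τ, hτB, Or.inr ?_⟩
        rw [hmc, hτdef, Finset.insert_erase hbot]
    · left
      push_neg at hns
      rw [mem_SB]
      have hcol := (mem_Av.mp hγ).1
      refine ⟨hcol, ?_, hns⟩
      by_contra hcard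
      push_neg at hcard
      have h1 : γ.card = d + 1 := le_antisymm (colorful_card_le hcol) hcard
      exact (mem_Av.mp hγ).2 ⟨h1, Or.inl hns⟩

lemma blocking {τ γ : Finset ((i : Fin (d + 1)) × Fin (n i))}
    (hτ : τ ∈ Bottoms d n) (hγAv : γ ∈ exampleAvoiding d n)
    (hsub : τ ⊆ γ) (h1 : γ ≠ τ) (h2 : γ ≠ insert (aa n (mcol τ)) τ) : pk τ < pk γ := by
  obtain ⟨hτAv, ⟨w0, hw0, hw0ns⟩, hbot⟩ := mem_Bottoms.mp hτ
  have hcards : τ.card < γ.card :=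
    Finset.card_lt_card (Finset.ssubset_iff_subset_ne.mpr ⟨hsub, Ne.symm h1⟩)
  have hstc : (insert (aa n (mcol τ)) τ).card = τ.card + 1 :=
    Finset.card_insert_of_notMem hbot
  have hnsτ : nscard τ ≤ d + 1 :=
    le_trans nscard_le_card (colorful_card_le (mem_Av.mp hτAv).1)
  have hins : γ.card ≤ (insert (aa n (mcol γ)) γ).card :=
    Finset.card_le_card (Finset.subset_insert _ _)
  rcases lt_or_ge (τ.card + 1) γ.card with hc | hc
  · -- γ has at least two more vertices
    have : (d + 2) * (τ.card + 2) ≤ (d + 2) * (insert (aa n (mcol γ)) γ).card :=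
      Nat.mul_le_mul_left _ (by omega)
    unfold pk
    rw [hstc]
    nlinarith
  · -- γ = insert v' τ
    have hcard : γ.card = τ.card + 1 := by omega
    have hsd : (γ \ τ).card = 1 := by rw [Finset.card_sdiff_of_subset hsub]; omega
    obtain ⟨v', hv'⟩ := Finset.card_eq_one.mp hsd
    have hv'γ : v' ∈ γ := by
      have : v' ∈ γ \ τ := hv' ▸ Finset.mem_singleton_self v'
      exact (Finset.mem_sdiff.mp this).1
    have hv'τ : v' ∉ τ := by
      have : v' ∈ γ \ τ := hv' ▸ Finset.mem_singleton_self v'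
      exact (Finset.mem_sdiff.mp this).2
    have hγeq : γ = insert v' τ := by
      ext w
      rw [Finset.mem_insert]
      constructor
      · intro hw
        by_cases hwτ : w ∈ τ
        · exact Or.inr hwτ
        · left
          have : w ∈ γ \ τ := Finset.mem_sdiff.mpr ⟨hw, hwτ⟩
          rw [hv'] at this
          exact Finset.mem_singleton.mp this
      · rintro (rfl | hw)
        · exact hv'γ
        · exact hsub hw
    have hne' : v' ≠ aa n (mcol τ) := by
      intro h
      exact h2 (by rw [hγeq, h])
    by_cases hvs : (v'.2 : ℕ) = 0
    · -- v' special: γ is a bottom of its pair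
      have hSeq : Sset γ = Sset τ := by rw [hγeq]; exact Sset_insert_special τ hvs
      have hmc : mcol γ = mcol τ := mcol_congr hSeq
      have haaγ : aa n (mcol γ) ∉ γ := by
        rw [hmc, hγeq]
        intro h
        rcases Finset.mem_insert.mp h with h | h
        · exact hne' h.symm
        · exact hbot h
      have hc1 : (insert (aa n (mcol γ)) γ).card = γ.card + 1 :=
        Finset.card_insert_of_notMem haaγ
      unfold pk
      rw [hstc, hc1, hcard]
      nlinarith
    · -- v' nonspecial
      have hns1 : nscard γ = nscard τ + 1 := by
        rw [hγeq]
        unfold nscard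
        rw [Finset.filter_insert, if_pos hvs]
        exact Finset.card_insert_of_notMem (fun h => hv'τ (Finset.mem_filter.mp h).1)
      unfold pk
      rw [hstc, hns1]
      have : (d + 2) * (τ.card + 1) ≤ (d + 2) * (insert (aa n (mcol γ)) γ).card :=
        Nat.mul_le_mul_left _ (by omega)
      omega

end Combinatorics2
section MainInduction
set_option linter.unusedSectionVars false
variable {d : ℕ} {n : Fin (d + 1) → ℕ} [∀ i, NeZero (n i)]

set_option maxHeartbeats 1000000 in
lemma main_induction :
    ∀ P : Finset (Finset ((i : Fin (d + 1)) × Fin (n i))), P ⊆ Bottoms d n →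
      DownClosed (KP P) →
      Relation.ReflTransGen CollapseStep (KP P) (specialBoundary d n) ∧
      Nonempty (ContinuousMap.HomotopyEquiv
        (realization (fun σ => σ ∈ KP P))
        (realization (fun σ => σ ∈ specialBoundary d n))) := by
  intro P
  induction P using Finset.strongInduction with
  | _ P ih =>
    intro hP hD
    rcases P.eq_empty_or_nonempty with rfl | hne
    · rw [KP_empty]
      exact ⟨Relation.ReflTransGen.refl, ⟨ContinuousMap.HomotopyEquiv.refl _⟩⟩
    · obtain ⟨τ0, hτ0P, hmax⟩ := Finset.exists_max_image P pk hne
      have hτ0B : τ0 ∈ Bottoms d n := hP hτ0P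
      have hv0 : (aa n (mcol τ0)) ∉ τ0 := (mem_Bottoms.mp hτ0B).2.2
      have hτ0KP : τ0 ∈ KP P := mem_KP.mpr (Or.inr ⟨τ0, hτ0P, Or.inl rfl⟩)
      have hσ0KP : (insert (aa n (mcol τ0)) τ0) ∈ KP P := mem_KP.mpr (Or.inr ⟨τ0, hτ0P, Or.inr rfl⟩)
      obtain ⟨w0, hw0τ0, hw0ns⟩ := (mem_Bottoms.mp hτ0B).2.1
      have key : ∀ γ ∈ KP P, τ0 ⊆ γ → γ = τ0 ∨ γ = (insert (aa n (mcol τ0)) τ0) := by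
        intro γ hγ hsub
        rcases mem_KP.mp hγ with hSB | ⟨τ', hτ'P, hcase⟩
        · exact absurd ((mem_SB.mp hSB).2.2 w0 (hsub hw0τ0)) hw0ns
        · by_contra hcon
          push_neg at hcon
          have hγAv : γ ∈ exampleAvoiding d n := by
            rcases hcase with rfl | rfl
            · exact (mem_Bottoms.mp (hP hτ'P)).1
            · exact top_mem_Av (hP hτ'P)
          have hlt : pk τ0 < pk γ := blocking hτ0B hγAv hsub hcon.1 hcon.2
          have hpkeq : pk γ = pk τ' := by
            rcases hcase with rfl | rfl
            · rfl
            · exact pk_top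
          rw [hpkeq] at hlt
          exact absurd (hmax τ' hτ'P) (not_le.mpr hlt)
      have hfree : ∀ γ ∈ KP P, τ0 ⊆ γ → γ ⊆ (insert (aa n (mcol τ0)) τ0) := by
        intro γ hγ hsub
        rcases key γ hγ hsub with rfl | rfl
        · exact Finset.subset_insert _ _
        · exact Finset.Subset.refl _
      have hfilter : KP (P.erase τ0) = (KP P).filter (fun γ => ¬ τ0 ⊆ γ) := by
        ext γ
        rw [Finset.mem_filter, mem_KP]
        constructor
        · rintro (hSB | ⟨τ', hτ', hcase⟩)
          · refine ⟨mem_KP.mpr (Or.inl hSB), ?_⟩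
            intro hsub
            exact absurd ((mem_SB.mp hSB).2.2 w0 (hsub hw0τ0)) hw0ns
          · have hτ'P : τ' ∈ P := Finset.mem_of_mem_erase hτ'
            have hτ'ne : τ' ≠ τ0 := Finset.ne_of_mem_erase hτ'
            refine ⟨mem_KP.mpr (Or.inr ⟨τ', hτ'P, hcase⟩), ?_⟩
            intro hsub
            have hγKP : γ ∈ KP P := mem_KP.mpr (Or.inr ⟨τ', hτ'P, hcase⟩)
            rcases key γ hγKP hsub with rfl | rfl
            · rcases hcase with h | h
              · exact hτ'ne h.symm
              · exact avBot_ne_top hτ0B h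
            · rcases hcase with h | h
              · exact avBot_ne_top (hP hτ'P) h.symm
              · exact hτ'ne (top_inj hτ0B (hP hτ'P) h).symm
        · rintro ⟨hγKP, hsub⟩
          rcases mem_KP.mp hγKP with hSB | ⟨τ', hτ'P, hcase⟩
          · exact Or.inl hSB
          · right
            refine ⟨τ', Finset.mem_erase.mpr ⟨?_, hτ'P⟩, hcase⟩
            rintro rfl
            apply hsub
            rcases hcase with rfl | rfl
            · exact Finset.Subset.refl _
            · exact Finset.subset_insert _ _
      have hstep : CollapseStep (KP P) (KP (P.erase τ0)) :=
        ⟨τ0, (insert (aa n (mcol τ0)) τ0), hτ0KP, hσ0KP, Finset.ssubset_insert hv0, hfree, hfilter⟩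
      have hD' : DownClosed (KP (P.erase τ0)) := by
        rw [hfilter]
        intro γ hγ ρ hρ
        rw [Finset.mem_filter] at hγ ⊢
        exact ⟨hD hγ.1 hρ, fun hsub => hγ.2 (hsub.trans hρ)⟩
      have hrec := ih (P.erase τ0) (Finset.erase_ssubset hτ0P)
        ((Finset.erase_subset _ _).trans hP) hD'
      refine ⟨Relation.ReflTransGen.head hstep hrec.1, ?_⟩
      have h1 := collapse_he (KP P) hD τ0 (aa n (mcol τ0)) hv0 (bottoms_nonempty_face hτ0B) hσ0KP hfree
      rw [← hfilter] at h1
      obtain ⟨e1⟩ := h1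
      obtain ⟨e2⟩ := hrec.2
      exact ⟨e1.trans e2⟩

end MainInduction
section Sphere

/-- The boundary of the standard simplex in `ℝ^N`. -/
def simpBd (N : ℕ) : Set (Fin N → ℝ) :=
  {g | (∀ i, 0 ≤ g i) ∧ ∑ i, g i = 1 ∧ ∃ i, g i = 0}

variable {m : ℕ}

/-- Section of the sum-zero hyperplane. -/
def Tmap (m : ℕ) (y : Fin m → ℝ) : Fin (m + 1) → ℝ :=
  fun j => if h : (j : ℕ) < m then y ⟨j, h⟩ else -∑ i, y i

def Smap (m : ℕ) (x : Fin (m + 1) → ℝ) : Fin m → ℝ := fun i => x i.castSucc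

lemma Tmap_castSucc (y : Fin m → ℝ) (i : Fin m) : Tmap m y i.castSucc = y i := by
  simp only [Tmap, Fin.coe_castSucc, i.isLt, dif_pos, Fin.eta]

lemma Tmap_last (y : Fin m → ℝ) : Tmap m y (Fin.last m) = -∑ i, y i := by
  simp [Tmap]

lemma Tmap_sum (y : Fin m → ℝ) : ∑ j, Tmap m y j = 0 := by
  rw [Fin.sum_univ_castSucc]
  simp [Tmap_castSucc, Tmap_last]

lemma Smap_Tmap (y : Fin m → ℝ) : Smap m (Tmap m y) = y := by
  funext i; exact Tmap_castSucc y i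

lemma Tmap_Smap {x : Fin (m + 1) → ℝ} (hx : ∑ j, x j = 0) : Tmap m (Smap m x) = x := by
  funext j
  rcases lt_or_ge (j : ℕ) m with h | h
  · rw [Tmap, dif_pos h]
    rfl
  · have hj : j = Fin.last m := Fin.ext (le_antisymm (Nat.lt_succ_iff.mp j.isLt) h)
    subst hj
    rw [Tmap_last]
    rw [Fin.sum_univ_castSucc] at hx
    have : ∑ i, Smap m x i = ∑ i : Fin m, x i.castSucc := rfl
    rw [this]
    linarith
  
lemma Tmap_smul (c : ℝ) (y : Fin m → ℝ) : Tmap m (c • y) = c • Tmap m y := by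
  funext j
  simp only [Tmap, Pi.smul_apply, smul_eq_mul]
  split_ifs with h
  · rfl
  · rw [← Finset.mul_sum]; ring

lemma Smap_smul (c : ℝ) (x : Fin (m + 1) → ℝ) : Smap m (c • x) = c • Smap m x := rfl

lemma Tmap_inj {y : Fin m → ℝ} (h : Tmap m y = 0) : y = 0 := by
  have := congrArg (Smap m) h
  rw [Smap_Tmap] at this
  rw [this]
  rfl

/-- minimum coordinate -/
def mnc (m : ℕ) (x : Fin (m + 1) → ℝ) : ℝ :=
  Finset.univ.inf' (Finset.univ_nonempty) x

lemma mnc_le (x : Fin (m + 1) → ℝ) (i : Fin (m + 1)) : mnc m x ≤ x i :=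
  Finset.inf'_le _ (Finset.mem_univ i)

lemma mnc_exists (x : Fin (m + 1) → ℝ) : ∃ i, mnc m x = x i := by
  obtain ⟨i, _, h⟩ := Finset.exists_mem_eq_inf' (Finset.univ_nonempty) x
  exact ⟨i, h⟩

lemma mnc_neg {x : Fin (m + 1) → ℝ} (hsum : ∑ j, x j = 0) (hx : x ≠ 0) : mnc m x < 0 := by
  by_contra h
  push_neg at h
  apply hx
  funext i
  have h1 : ∀ j ∈ Finset.univ, 0 ≤ x j := fun j _ => le_trans h (mnc_le x j)
  have := (Finset.sum_eq_zero_iff_of_nonneg h1).mp hsum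
  exact this i (Finset.mem_univ i)

lemma mnc_smul (c : ℝ) (hc : 0 ≤ c) (x : Fin (m + 1) → ℝ) : mnc m (c • x) = c * mnc m x := by
  apply le_antisymm
  · obtain ⟨i, hi⟩ := mnc_exists x
    calc mnc m (c • x) ≤ (c • x) i := mnc_le _ i
      _ = c * mnc m x := by rw [Pi.smul_apply, smul_eq_mul, hi]
  · apply Finset.le_inf'
    intro j _
    exact mul_le_mul_of_nonneg_left (mnc_le x j) hc

lemma mnc_sub_const (x : Fin (m + 1) → ℝ) (a : ℝ) :
    mnc m (fun i => x i - a) = mnc m x - a := by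
  apply le_antisymm
  · obtain ⟨i, hi⟩ := mnc_exists x
    calc mnc m (fun i => x i - a) ≤ x i - a := mnc_le (fun i => x i - a) i
      _ = mnc m x - a := by rw [hi]
  · apply Finset.le_inf'
    intro j _
    have := mnc_le x j
    show mnc m x - a ≤ x j - a
    linarith

/-- rescaling factor -/
noncomputable def tsc (m : ℕ) (x : Fin (m + 1) → ℝ) : ℝ :=
  (((m : ℝ) + 1) * (- mnc m x))⁻¹

lemma tsc_pos {x : Fin (m + 1) → ℝ} (h : mnc m x < 0) : 0 < tsc m x := by
  unfold tsc
  have h1 : (0:ℝ) < (m:ℝ) + 1 := by positivity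
  have h2 : (0:ℝ) < - mnc m x := by linarith
  exact inv_pos.mpr (mul_pos h1 h2)

lemma tsc_smul {c : ℝ} (hc : 0 < c) (x : Fin (m + 1) → ℝ) :
    tsc m (c • x) = c⁻¹ * tsc m x := by
  unfold tsc
  rw [mnc_smul c hc.le x]
  rw [show (((m:ℝ)+1) * -(c * mnc m x)) = c * (((m:ℝ)+1) * - mnc m x) by ring, mul_inv]

lemma tsc_mul_mnc {x : Fin (m + 1) → ℝ} (h : mnc m x < 0) :
    tsc m x * mnc m x = -((m : ℝ) + 1)⁻¹ := by
  unfold tsc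
  have h1 : ((m:ℝ) + 1) ≠ 0 := by positivity
  have h2 : mnc m x ≠ 0 := ne_of_lt h
  field_simp

end Sphere
section SphereHomeo

open Finset

variable {m : ℕ}

noncomputable abbrev ee (m : ℕ) : EuclideanSpace ℝ (Fin m) ≃L[ℝ] (Fin m → ℝ) :=
  EuclideanSpace.equiv (Fin m) ℝ

/-- From the sphere to the simplex boundary. -/
noncomputable def FmFun (m : ℕ) (u : EuclideanSpace ℝ (Fin m)) : Fin (m + 1) → ℝ :=
  fun i => ((m : ℝ) + 1)⁻¹ + tsc m (Tmap m (ee m u)) * Tmap m (ee m u) i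

/-- From the simplex boundary to the sphere. -/
noncomputable def GmFun (m : ℕ) (g : Fin (m + 1) → ℝ) : EuclideanSpace ℝ (Fin m) :=
  ‖(ee m).symm (Smap m (fun i => g i - ((m : ℝ) + 1)⁻¹))‖⁻¹ •
    (ee m).symm (Smap m (fun i => g i - ((m : ℝ) + 1)⁻¹))

lemma Tmap_ne_zero {u : EuclideanSpace ℝ (Fin m)} (hu : u ≠ 0) : Tmap m (ee m u) ≠ 0 := by
  intro h
  apply hu
  have h1 : ee m u = 0 := Tmap_inj h
  calc u = (ee m).symm (ee m u) := ((ee m).symm_apply_apply u).symm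
    _ = (ee m).symm 0 := by rw [h1]
    _ = 0 := map_zero _

lemma sphere_ne_zero {u : EuclideanSpace ℝ (Fin m)} (hu : ‖u‖ = 1) : u ≠ 0 := by
  intro h
  rw [h, norm_zero] at hu
  exact one_ne_zero hu.symm

lemma mnc_Tmap_neg {u : EuclideanSpace ℝ (Fin m)} (hu : ‖u‖ = 1) :
    mnc m (Tmap m (ee m u)) < 0 :=
  mnc_neg (Tmap_sum _) (Tmap_ne_zero (sphere_ne_zero hu))

lemma FmFun_mem {u : EuclideanSpace ℝ (Fin m)} (hu : ‖u‖ = 1) : FmFun m u ∈ simpBd (m + 1) := by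
  set x := Tmap m (ee m u) with hx
  have hmn : mnc m x < 0 := mnc_Tmap_neg hu
  have hts : 0 < tsc m x := tsc_pos hmn
  have hmul : tsc m x * mnc m x = -((m : ℝ) + 1)⁻¹ := tsc_mul_mnc hmn
  refine ⟨?_, ?_, ?_⟩
  · intro i
    have h1 : tsc m x * mnc m x ≤ tsc m x * x i :=
      mul_le_mul_of_nonneg_left (mnc_le x i) hts.le
    rw [hmul] at h1
    show 0 ≤ ((m : ℝ) + 1)⁻¹ + tsc m x * x i
    linarith
  · show ∑ i, (((m : ℝ) + 1)⁻¹ + tsc m x * x i) = 1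
    have hxs : ∑ i, x i = 0 := by rw [hx]; exact Tmap_sum _
    rw [Finset.sum_add_distrib, ← Finset.mul_sum, hxs, Finset.sum_const,
      Finset.card_univ, Fintype.card_fin, nsmul_eq_mul]
    have : ((m : ℝ) + 1) ≠ 0 := by positivity
    push_cast
    field_simp
    ring
  · obtain ⟨i, hi⟩ := mnc_exists x
    refine ⟨i, ?_⟩
    show ((m : ℝ) + 1)⁻¹ + tsc m x * x i = 0
    rw [← hi, hmul]
    ring

lemma GmFun_z_ne {g : Fin (m + 1) → ℝ} (hg : g ∈ simpBd (m + 1)) :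
    (ee m).symm (Smap m (fun i => g i - ((m : ℝ) + 1)⁻¹)) ≠ 0 := by
  obtain ⟨hg0, hg1, i0, hi0⟩ := hg
  set h : Fin (m + 1) → ℝ := fun i => g i - ((m : ℝ) + 1)⁻¹ with hh
  have hNm : ((m : ℝ) + 1) ≠ 0 := by positivity
  have hsumh : ∑ i, h i = 0 := by
    rw [hh]
    rw [Finset.sum_sub_distrib, hg1, Finset.sum_const, Finset.card_univ, Fintype.card_fin,
      nsmul_eq_mul]
    push_cast
    field_simp
    ring
  intro hz
  have h1 : Smap m h = 0 := by
    have := congrArg (ee m) hz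
    rw [(ee m).apply_symm_apply, map_zero] at this
    exact this
  have h2 : h = 0 := by
    rw [← Tmap_Smap hsumh, h1]
    funext j
    simp [Tmap]
  have h3 : g i0 = ((m : ℝ) + 1)⁻¹ := by
    have := congrFun h2 i0
    simp only [hh, Pi.zero_apply] at this
    linarith
  rw [hi0] at h3
  exact (inv_ne_zero hNm) h3.symm

lemma GmFun_mem {g : Fin (m + 1) → ℝ} (hg : g ∈ simpBd (m + 1)) : ‖GmFun m g‖ = 1 := by
  unfold GmFun
  exact norm_smul_inv_norm (GmFun_z_ne hg)

lemma GmFun_FmFun {u : EuclideanSpace ℝ (Fin m)} (hu : ‖u‖ = 1) : GmFun m (FmFun m u) = u := by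
  set x := Tmap m (ee m u) with hx
  have hmn : mnc m x < 0 := mnc_Tmap_neg hu
  have hts : 0 < tsc m x := tsc_pos hmn
  have hfe : (fun i => FmFun m u i - ((m : ℝ) + 1)⁻¹) = tsc m x • x := by
    funext i
    show ((m : ℝ) + 1)⁻¹ + tsc m x * x i - ((m : ℝ) + 1)⁻¹ = tsc m x * x i
    ring
  unfold GmFun
  rw [hfe]
  have h1 : Smap m (tsc m x • x) = tsc m x • ee m u := by
    rw [Smap_smul, hx, Smap_Tmap]
  rw [h1, map_smul, (ee m).symm_apply_apply]
  rw [norm_smul, hu, Real.norm_eq_abs, abs_of_pos hts, mul_one, smul_smul,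
    inv_mul_cancel₀ (ne_of_gt hts), one_smul]

lemma FmFun_GmFun {g : Fin (m + 1) → ℝ} (hg : g ∈ simpBd (m + 1)) : FmFun m (GmFun m g) = g := by
  obtain ⟨hg0, hg1, i0, hi0⟩ := hg
  set h : Fin (m + 1) → ℝ := fun i => g i - ((m : ℝ) + 1)⁻¹ with hh
  have hNm : ((m : ℝ) + 1) ≠ 0 := by positivity
  have hsumh : ∑ i, h i = 0 := by
    rw [hh, Finset.sum_sub_distrib, hg1, Finset.sum_const, Finset.card_univ, Fintype.card_fin,
      nsmul_eq_mul]
    push_cast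
    field_simp
    ring
  set z := (ee m).symm (Smap m h) with hz
  have hzne : z ≠ 0 := GmFun_z_ne ⟨hg0, hg1, i0, hi0⟩
  have hc : (0 : ℝ) < ‖z‖ := norm_pos_iff.mpr hzne
  have hG : GmFun m g = ‖z‖⁻¹ • z := rfl
  have heu : ee m (GmFun m g) = ‖z‖⁻¹ • Smap m h := by
    rw [hG, map_smul, hz, (ee m).apply_symm_apply]
  have hxeq : Tmap m (ee m (GmFun m g)) = ‖z‖⁻¹ • h := by
    rw [heu, Tmap_smul, Tmap_Smap hsumh]
  -- the minimum of g is 0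
  have hmng : mnc m g = 0 := by
    apply le_antisymm
    · rw [← hi0]; exact mnc_le g i0
    · exact Finset.le_inf' _ _ (fun j _ => hg0 j)
  have hmnh : mnc m h = -((m : ℝ) + 1)⁻¹ := by
    rw [hh, mnc_sub_const, hmng]; ring
  have htsh : tsc m h = 1 := by
    unfold tsc
    rw [hmnh]
    rw [show -(-((m : ℝ) + 1)⁻¹) = ((m : ℝ) + 1)⁻¹ by ring, mul_inv_cancel₀ hNm, inv_one]
  have htsx : tsc m (Tmap m (ee m (GmFun m g))) = ‖z‖ := by
    rw [hxeq, tsc_smul (inv_pos.mpr hc), htsh, inv_inv, mul_one]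
  funext i
  show ((m : ℝ) + 1)⁻¹ + tsc m (Tmap m (ee m (GmFun m g))) * Tmap m (ee m (GmFun m g)) i = g i
  rw [htsx, hxeq]
  show ((m : ℝ) + 1)⁻¹ + ‖z‖ * (‖z‖⁻¹ * h i) = g i
  rw [← mul_assoc, mul_inv_cancel₀ (ne_of_gt hc), one_mul, hh]
  ring

/-- The simplex boundary is homeomorphic to the sphere. -/
noncomputable def bdHomeoSphere (m : ℕ) :
    (simpBd (m + 1)) ≃ₜ (Metric.sphere (0 : EuclideanSpace ℝ (Fin m)) 1) where
  toFun := fun g => ⟨GmFun m g.1, by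
    rw [mem_sphere_zero_iff_norm]; exact GmFun_mem g.2⟩
  invFun := fun u => ⟨FmFun m u.1, FmFun_mem (mem_sphere_zero_iff_norm.mp u.2)⟩
  left_inv := fun g => Subtype.ext (FmFun_GmFun g.2)
  right_inv := fun u => Subtype.ext (GmFun_FmFun (mem_sphere_zero_iff_norm.mp u.2))
  continuous_toFun := by
    apply Continuous.subtype_mk
    have ch : Continuous fun g : simpBd (m + 1) =>
        (fun i => (g : Fin (m + 1) → ℝ) i - ((m : ℝ) + 1)⁻¹) := by
      apply continuous_pi
      intro i
      exact ((continuous_apply i).comp continuous_subtype_val).sub continuous_const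
    have cS : Continuous (Smap m) := continuous_pi (fun i => continuous_apply _)
    have cz : Continuous fun g : simpBd (m + 1) =>
        (ee m).symm (Smap m (fun i => (g : Fin (m + 1) → ℝ) i - ((m : ℝ) + 1)⁻¹)) :=
      (ee m).symm.continuous.comp (cS.comp ch)
    have cn : Continuous fun g : simpBd (m + 1) =>
        ‖(ee m).symm (Smap m (fun i => (g : Fin (m + 1) → ℝ) i - ((m : ℝ) + 1)⁻¹))‖⁻¹ :=
      (continuous_norm.comp cz).inv₀ (fun g => norm_ne_zero_iff.mpr (GmFun_z_ne g.2))
    exact cn.smul cz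
  continuous_invFun := by
    apply Continuous.subtype_mk
    have cT : Continuous (Tmap m) := by
      apply continuous_pi
      intro j
      unfold Tmap
      split_ifs with h
      · exact continuous_apply _
      · exact (continuous_finset_sum _ (fun i _ => continuous_apply i)).neg
    have cx : Continuous fun u : Metric.sphere (0 : EuclideanSpace ℝ (Fin m)) 1 =>
        Tmap m (ee m (u : EuclideanSpace ℝ (Fin m))) :=
      cT.comp ((ee m).continuous.comp continuous_subtype_val)
    have cmn : Continuous (mnc m) :=
      continuous_finset_inf' Finset.univ_nonempty (fun i (x : Fin (m + 1) → ℝ) => x i)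
        (fun i => continuous_apply i)
    have cts : Continuous fun u : Metric.sphere (0 : EuclideanSpace ℝ (Fin m)) 1 =>
        tsc m (Tmap m (ee m (u : EuclideanSpace ℝ (Fin m)))) := by
      apply Continuous.inv₀
      · exact continuous_const.mul ((cmn.comp cx).neg)
      · intro u
        have hmn : mnc m (Tmap m (ee m (u : EuclideanSpace ℝ (Fin m)))) < 0 :=
          mnc_Tmap_neg (mem_sphere_zero_iff_norm.mp u.2)
        have : (0:ℝ) < ((m : ℝ) + 1) := by positivity
        nlinarith
    apply continuous_pi
    intro i
    exact continuous_const.add (cts.mul ((continuous_apply i).comp cx))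

end SphereHomeo
section RealSB
set_option linter.unusedSectionVars false

variable {d : ℕ} {n : Fin (d + 1) → ℕ} [∀ i, NeZero (n i)]

noncomputable def toSimp (d : ℕ) (n : Fin (d + 1) → ℕ) [∀ i, NeZero (n i)]
    (f : ((i : Fin (d + 1)) × Fin (n i)) → ℝ) : Fin (d + 1) → ℝ :=
  fun i => f (aa n i)

noncomputable def fromSimp (d : ℕ) (n : Fin (d + 1) → ℕ) [∀ i, NeZero (n i)]
    (g : Fin (d + 1) → ℝ) : ((i : Fin (d + 1)) × Fin (n i)) → ℝ :=
  fun w => if (w.2 : ℕ) = 0 then g w.1 else 0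

lemma aa_injective : Function.Injective (aa n) := fun i j h => congrArg Sigma.fst h

lemma realSB_support_special {f : ((i : Fin (d + 1)) × Fin (n i)) → ℝ}
    (hf : f ∈ realization (fun σ => σ ∈ specialBoundary d n)) :
    ∀ w, (w.2 : ℕ) ≠ 0 → f w = 0 := by
  obtain ⟨h0, h1, σ, hσSB, hσ⟩ := hf
  intro w hw
  by_contra h
  have : w ∈ Function.support f := h
  rw [hσ, Finset.mem_coe] at this
  exact hw ((mem_SB.mp hσSB).2.2 w this)

lemma toSimp_mem {f : ((i : Fin (d + 1)) × Fin (n i)) → ℝ}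
    (hf : f ∈ realization (fun σ => σ ∈ specialBoundary d n)) :
    toSimp d n f ∈ simpBd (d + 1) := by
  obtain ⟨h0, h1, σ, hσSB, hσ⟩ := hf
  have hsp := realSB_support_special (⟨h0, h1, σ, hσSB, hσ⟩ :
    f ∈ realization (fun σ => σ ∈ specialBoundary d n))
  refine ⟨fun i => h0 _, ?_, ?_⟩
  · -- sum over sigma type
    have h2 : ∑ w : (i : Fin (d + 1)) × Fin (n i), f w = ∑ i, toSimp d n f i := by
      rw [← Finset.univ_sigma_univ, Finset.sum_sigma]
      apply Finset.sum_congr rfl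
      intro i _
      have h3 : ∀ j : Fin (n i), j ≠ 0 → f ⟨i, j⟩ = 0 := by
        intro j hj
        apply hsp ⟨i, j⟩
        simpa [Fin.val_eq_zero_iff] using hj
      rw [Fintype.sum_eq_single (0 : Fin (n i)) h3]
      rfl
    rw [← h2, h1]
  · -- some coordinate vanishes
    by_contra hc
    push_neg at hc
    have hall : ∀ i, aa n i ∈ σ := by
      intro i
      have : f (aa n i) ≠ 0 := hc i
      have : aa n i ∈ Function.support f := this
      rwa [hσ, Finset.mem_coe] at this
    have himg : Finset.univ.image (aa n) ⊆ σ := by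
      intro w hw
      obtain ⟨i, _, rfl⟩ := Finset.mem_image.mp hw
      exact hall i
    have hcard : d + 1 ≤ σ.card := by
      calc d + 1 = (Finset.univ.image (aa n)).card := by
            rw [Finset.card_image_of_injective _ aa_injective, Finset.card_univ,
              Fintype.card_fin]
        _ ≤ σ.card := Finset.card_le_card himg
    have := (mem_SB.mp hσSB).2.1
    omega

lemma fromSimp_mem {g : Fin (d + 1) → ℝ} (hg : g ∈ simpBd (d + 1)) :
    fromSimp d n g ∈ realization (fun σ => σ ∈ specialBoundary d n) := by
  classical
  obtain ⟨hg0, hg1, i0, hi0⟩ := hg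
  refine ⟨?_, ?_, ?_⟩
  · intro w
    unfold fromSimp
    split_ifs with h
    · exact hg0 w.1
    · exact le_refl 0
  · rw [← Finset.univ_sigma_univ, Finset.sum_sigma]
    have h2 : ∀ i : Fin (d + 1), ∑ j : Fin (n i), fromSimp d n g ⟨i, j⟩ = g i := by
      intro i
      have h3 : ∀ j : Fin (n i), j ≠ 0 → fromSimp d n g ⟨i, j⟩ = 0 := by
        intro j hj
        unfold fromSimp
        rw [if_neg]
        simpa [Fin.val_eq_zero_iff] using hj
      rw [Fintype.sum_eq_single (0 : Fin (n i)) h3]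
      unfold fromSimp
      rw [if_pos]
      simp
    rw [Finset.sum_congr rfl (fun i _ => h2 i), hg1]
  · refine ⟨(Finset.univ.filter (fun i => g i ≠ 0)).image (aa n), ?_, ?_⟩
    · show _ ∈ specialBoundary d n
      rw [mem_SB]
      refine ⟨?_, ?_, ?_⟩
      · intro v hv w hw hvw
        obtain ⟨i, _, rfl⟩ := Finset.mem_image.mp hv
        obtain ⟨j, _, rfl⟩ := Finset.mem_image.mp hw
        rw [show i = j from hvw]
      · have hne : Finset.univ.filter (fun i => g i ≠ 0) ≠ Finset.univ := by
          intro h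
          have : i0 ∈ Finset.univ.filter (fun i => g i ≠ 0) := by
            rw [h]; exact Finset.mem_univ i0
          exact (Finset.mem_filter.mp this).2 hi0
        have hlt : (Finset.univ.filter (fun i => g i ≠ 0)).card < d + 1 := by
          have := Finset.card_lt_card (Finset.ssubset_iff_subset_ne.mpr
            ⟨Finset.filter_subset _ _, hne⟩)
          simpa using this
        rw [Finset.card_image_of_injective _ aa_injective]
        omega
      · intro v hv
        obtain ⟨i, _, rfl⟩ := Finset.mem_image.mp hv
        exact aa_special i
    · ext w
      simp only [Function.mem_support, Finset.coe_image, Set.mem_image, Finset.mem_coe,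
        Finset.mem_filter, Finset.mem_univ, true_and]
      constructor
      · intro hw
        have hsp : (w.2 : ℕ) = 0 := by
          by_contra h
          exact hw (by unfold fromSimp; rw [if_neg h])
        have : fromSimp d n g w = g w.1 := by unfold fromSimp; rw [if_pos hsp]
        refine ⟨w.1, by rw [← this]; exact hw, (special_eq hsp).symm⟩
      · rintro ⟨i, hgi, rfl⟩
        unfold fromSimp
        rw [if_pos (aa_special i)]
        exact hgi

lemma toSimp_fromSimp {g : Fin (d + 1) → ℝ} : toSimp d n (fromSimp d n g) = g := by
  funext i
  unfold toSimp fromSimp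
  rw [if_pos (aa_special i)]
  rfl

lemma fromSimp_toSimp {f : ((i : Fin (d + 1)) × Fin (n i)) → ℝ}
    (hf : f ∈ realization (fun σ => σ ∈ specialBoundary d n)) :
    fromSimp d n (toSimp d n f) = f := by
  funext w
  unfold fromSimp toSimp
  split_ifs with h
  · rw [← special_eq h]
  · exact (realSB_support_special hf w h).symm

/-- The realization of the special boundary is homeomorphic to the simplex boundary. -/
noncomputable def realSBHomeo (d : ℕ) (n : Fin (d + 1) → ℕ) [∀ i, NeZero (n i)] :
    (realization (fun σ => σ ∈ specialBoundary d n)) ≃ₜ (simpBd (d + 1)) where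
  toFun := fun f => ⟨toSimp d n f.1, toSimp_mem f.2⟩
  invFun := fun g => ⟨fromSimp d n g.1, fromSimp_mem g.2⟩
  left_inv := fun f => Subtype.ext (fromSimp_toSimp f.2)
  right_inv := fun g => Subtype.ext (toSimp_fromSimp (n := n) (g := g.1))
  continuous_toFun := by
    apply Continuous.subtype_mk
    apply continuous_pi
    intro i
    show Continuous fun f : (realization (fun σ => σ ∈ specialBoundary d n)) =>
      (f : ((i : Fin (d + 1)) × Fin (n i)) → ℝ) (aa n i)
    exact (continuous_apply (aa n i)).comp continuous_subtype_val
  continuous_invFun := by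
    apply Continuous.subtype_mk
    apply continuous_pi
    intro w
    unfold fromSimp
    split_ifs with h
    · exact (continuous_apply w.1).comp continuous_subtype_val
    · exact continuous_const

end RealSB
/-- **Collapsibility of the example's avoiding complex.** The avoiding complex of
the extremal example collapses onto the boundary of the special simplex
`{a^0, …, a^d}`; in particular it is homotopy equivalent to the sphere `S^{d-1}`. -/
theorem example_avoiding_collapses (d : ℕ) (n : Fin (d + 1) → ℕ) (hn : ∀ i, 2 ≤ n i)
    [∀ i, NeZero (n i)] :
    Relation.ReflTransGen CollapseStep (exampleAvoiding d n) (specialBoundary d n) ∧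
    Nonempty
      (ContinuousMap.HomotopyEquiv
        (realization (fun σ => σ ∈ exampleAvoiding d n))
        (Metric.sphere (0 : EuclideanSpace ℝ (Fin d)) 1)) := by
  have hD : DownClosed (KP (Bottoms d n)) := by
    rw [KP_Bottoms]; exact Av_down
  obtain ⟨hcol, hhe⟩ := main_induction (Bottoms d n) (Finset.Subset.refl _) hD
  rw [KP_Bottoms] at hcol hhe
  refine ⟨hcol, ?_⟩
  obtain ⟨e1⟩ := hhe
  exact ⟨e1.trans (((realSBHomeo d n).trans (bdHomeoSphere d)).toHomotopyEquiv)⟩
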